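/- Let λ be a regular cardinal and K a λ-accessible category. If K has an object that is not (<λ)-presentable and K has no proper λ-directed systems of (<λ)-presentable objects, then K has an object of presentability rank exactly λ. -/

import Mathlib

open CategoryTheory Limits Cardinal

universe u v u₂ v₂

/-- A preorder is `μ`-directed if every subset of cardinality `< μ` has an upper bound. -/
def IsCardDirected (μ : Cardinal.{v}) (J : Type v) [Preorder J] : Prop :=
  ∀ S : Set J, #S < μ → ∃ b, ∀ s ∈ S, s ≤ b

/-- An object is `μ`-presentable if its hom-functor preserves `μ`-directed colimits. -/
def IsPresentableObj (μ : Cardinal.{v}) {K : Type u} [Category.{v} K] (M : K) : Prop :=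
  ∀ (J : Type v) (_ : Preorder J), IsCardDirected μ J →
    Nonempty (PreservesColimitsOfShape J (coyoneda.obj (Opposite.op M)))

/-- `(<λ)`-presentable: `θ`-presentable for some regular `θ < max(λ, ℵ₁)`. -/
def IsLtPresentableObj (lam : Cardinal.{v}) {K : Type u} [Category.{v} K] (M : K) : Prop :=
  ∃ θ : Cardinal.{v}, θ.IsRegular ∧ θ < max lam (Cardinal.aleph 1) ∧ IsPresentableObj θ M

/-- `M` has presentability rank `lam`: the least regular cardinal at which `M` is presentable. -/
def HasPresRank (lam : Cardinal.{v}) {K : Type u} [Category.{v} K] (M : K) : Prop :=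
  lam.IsRegular ∧ IsPresentableObj lam M ∧
    ∀ ν : Cardinal.{v}, ν.IsRegular → IsPresentableObj ν M → lam ≤ ν

/-- `K` has all `μ`-directed colimits. -/
def HasMuDirectedColimits (μ : Cardinal.{v}) (K : Type u) [Category.{v} K] : Prop :=
  ∀ (J : Type v) (_ : Preorder J), IsCardDirected μ J → HasColimitsOfShape J K

/-- `(μ, <λ)`-accessibility of a category `K`. -/
def IsAccCat (μ lam : Cardinal.{v}) (K : Type u) [Category.{v} K] : Prop :=
  HasMuDirectedColimits μ K ∧
  (∃ S : Set K, Small.{v} S ∧ ∀ M : K, IsLtPresentableObj lam M → ∃ N ∈ S, Nonempty (M ≅ N)) ∧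
  (∀ M : K, ∃ (J : Type v) (_ : Preorder J) (D : J ⥤ K) (c : Cocone D),
     IsCardDirected μ J ∧ (∀ j, IsLtPresentableObj lam (D.obj j)) ∧
     Nonempty (IsColimit c) ∧ c.pt = M)

/-- A retract of a functor preserving colimits of shape `J` preserves colimits of shape `J`. -/
lemma preservesColimitsOfShape_of_retract {C : Type u} [Category.{v} C]
    {D : Type u₂} [Category.{v₂} D] {J : Type*} [Category J]
    {F G : C ⥤ D} (σ : F ⟶ G) (ρ : G ⟶ F) (hσρ : σ ≫ ρ = 𝟙 F)
    [PreservesColimitsOfShape J G] : PreservesColimitsOfShape J F := by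
  constructor
  intro E
  constructor
  intro c hc
  obtain ⟨hG⟩ := PreservesColimit.preserves (F := G) hc
  constructor
  refine
    { desc := fun s =>
        σ.app c.pt ≫ hG.desc ((Cocone.precompose (Functor.whiskerLeft E ρ)).obj s)
      fac := ?_
      uniq := ?_ }
  · intro s j
    have hnat : F.map (c.ι.app j) ≫ σ.app c.pt = σ.app (E.obj j) ≫ G.map (c.ι.app j) :=
      (σ.naturality (c.ι.app j))
    have hfac := hG.fac ((Cocone.precompose (Functor.whiskerLeft E ρ)).obj s) j
    simp only [Functor.mapCocone_ι_app] at hfac ⊢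
    rw [← Category.assoc, hnat, Category.assoc, hfac]
    simp only [Cocone.precompose_obj_ι, NatTrans.comp_app, Functor.whiskerLeft_app]
    rw [← Category.assoc]
    have : σ.app (E.obj j) ≫ ρ.app (E.obj j) = 𝟙 (F.obj (E.obj j)) := by
      rw [← NatTrans.comp_app, hσρ]; rfl
    rw [this]; simp
  · intro s m hm
    have key : ρ.app c.pt ≫ m = hG.desc ((Cocone.precompose (Functor.whiskerLeft E ρ)).obj s) := by
      apply hG.uniq ((Cocone.precompose (Functor.whiskerLeft E ρ)).obj s)
      intro j
      have hnat : G.map (c.ι.app j) ≫ ρ.app c.pt = ρ.app (E.obj j) ≫ F.map (c.ι.app j) :=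
        (ρ.naturality (c.ι.app j))
      simp only [Functor.mapCocone_ι_app] at hm ⊢
      rw [← Category.assoc, hnat, Category.assoc, hm j]
      simp
    show m = σ.app c.pt ≫ hG.desc ((Cocone.precompose (Functor.whiskerLeft E ρ)).obj s)
    rw [← key, ← Category.assoc]
    have : σ.app c.pt ≫ ρ.app c.pt = 𝟙 (F.obj c.pt) := by
      rw [← NatTrans.comp_app, hσρ]; rfl
    rw [this]; simp

/-- Presentability is upward closed in the cardinal. -/
lemma isPresentableObj_mono {K : Type u} [Category.{v} K] {θ μ : Cardinal.{v}}
    (h : θ ≤ μ) {M : K} (hM : IsPresentableObj θ M) : IsPresentableObj μ M := by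
  intro J pJ hJ
  exact hM J pJ (fun S hS => hJ S (lt_of_lt_of_le hS h))

/-- A retract of a `θ`-presentable object is `θ`-presentable. -/
lemma isPresentableObj_of_retract {K : Type u} [Category.{v} K] {θ : Cardinal.{v}}
    {M N : K} (u : M ⟶ N) (w : N ⟶ M) (huw : u ≫ w = 𝟙 M)
    (hN : IsPresentableObj θ N) : IsPresentableObj θ M := by
  intro J pJ hJ
  obtain ⟨hG⟩ := hN J pJ hJ
  refine ⟨preservesColimitsOfShape_of_retract
    (coyoneda.map w.op) (coyoneda.map u.op) ?_⟩
  rw [← coyoneda.map_comp, ← op_comp, huw]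
  simp

theorem stmt14 {K : Type u} [Category.{v} K] (lam : Cardinal.{v}) (hlam : lam.IsRegular)
    (hacc : IsAccCat lam (Order.succ lam) K)
    (hbig : ∃ M : K, ¬ IsLtPresentableObj lam M)
    (hnoproper : ¬ ∃ (J : Type v) (_ : Preorder J) (D : J ⥤ K) (c : Cocone D)
        (_ : IsColimit c),
      IsCardDirected lam J ∧ (∀ j : J, IsLtPresentableObj lam (D.obj j)) ∧
      ¬ ∃ (i : J) (g : c.pt ⟶ D.obj i), g ≫ c.ι.app i = 𝟙 c.pt) :
    ∃ M : K, HasPresRank lam M := by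
  obtain ⟨M, hM⟩ := hbig
  obtain ⟨_, _, hdecomp⟩ := hacc
  obtain ⟨J, pJ, D, c, hdir, hpres, ⟨hc⟩, hpt⟩ := hdecomp M
  -- max (Order.succ lam) ℵ₁ = Order.succ lam
  have haleph1 : Cardinal.aleph 1 ≤ Order.succ lam := by
    rw [← Cardinal.succ_aleph0]
    exact Order.succ_le_succ hlam.aleph0_le
  have hmax : max (Order.succ lam) (Cardinal.aleph 1) = Order.succ lam :=
    max_eq_left haleph1
  -- some object in the diagram is not (<lam)-presentable
  have hex : ∃ j : J, ¬ IsLtPresentableObj lam (D.obj j) := by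
    by_contra hall
    push_neg at hall
    apply hnoproper
    refine ⟨J, pJ, D, c, hc, hdir, hall, ?_⟩
    intro hfac
    obtain ⟨i, g, hg⟩ := hfac
    obtain ⟨θ, hθreg, hθlt, hθpres⟩ := hall i
    apply hM
    refine ⟨θ, hθreg, hθlt, ?_⟩
    have := isPresentableObj_of_retract (hpt ▸ g) (hpt ▸ c.ι.app i) ?_ hθpres
    · exact this
    · subst hpt; exact hg
  obtain ⟨j, hj⟩ := hex
  obtain ⟨θ, hθreg, hθlt, hθpres⟩ := hpres j
  rw [hmax] at hθlt
  have hθle : θ ≤ lam := Order.lt_succ_iff.mp hθlt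
  refine ⟨D.obj j, hlam, isPresentableObj_mono hθle hθpres, ?_⟩
  intro ν hνreg hνpres
  by_contra hle
  push_neg at hle
  exact hj ⟨ν, hνreg, lt_of_lt_of_le hle (le_max_left _ _), hνpres⟩
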